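/- Let μ ∈ ℝ and σ_1, σ_2 ≥ 0, and let X and Y be independent random variables with X Gaussian with mean μ and variance σ_1² and Y Gaussian with mean μ and variance σ_2². Then E[max(X, Y)] = μ + √((σ_1² + σ_2²)/(2π)). -/

import Mathlib

open MeasureTheory ProbabilityTheory Real Set Filter
open scoped NNReal ENNReal

namespace ExpMaxAux


noncomputable def stdPdf : ℝ → ℝ≥0 := fun x => Real.toNNReal (gaussianPDFReal 0 1 x)

lemma stdPdf_coe (x : ℝ) : (stdPdf x : ℝ) = (√(2*π))⁻¹ * rexp (-(2⁻¹) * x^2) := by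
  rw [stdPdf, Real.coe_toNNReal _ (gaussianPDFReal_nonneg 0 1 x), gaussianPDFReal]
  simp only [NNReal.coe_one, mul_one, sub_zero]
  ring_nf

lemma stdPdf_meas : Measurable stdPdf :=
  (measurable_gaussianPDFReal 0 1).real_toNNReal

lemma stdPdf_cont : Continuous (fun x => (stdPdf x : ℝ)) := by
  have : Continuous (gaussianPDFReal 0 1) := by
    unfold gaussianPDFReal
    continuity
  have he : (fun x => (stdPdf x : ℝ)) = gaussianPDFReal 0 1 := by
    funext x; exact Real.coe_toNNReal _ (gaussianPDFReal_nonneg 0 1 x)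
  rw [he]; exact this

lemma gaussianReal_one_eq : gaussianReal 0 1 = volume.withDensity (fun x => (stdPdf x : ℝ≥0∞)) := by
  rw [gaussianReal_of_var_ne_zero 0 one_ne_zero]
  congr 1

lemma integral_std (f : ℝ → ℝ) :
    ∫ x, f x ∂(gaussianReal 0 1) = ∫ x, (stdPdf x : ℝ) * f x := by
  rw [gaussianReal_one_eq, integral_withDensity_eq_integral_smul stdPdf_meas]
  simp [NNReal.smul_def]

lemma integrable_std_iff (f : ℝ → ℝ) :
    Integrable f (gaussianReal 0 1) ↔ Integrable (fun x => (stdPdf x : ℝ) * f x) volume := by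
  rw [gaussianReal_one_eq, integrable_withDensity_iff_integrable_smul stdPdf_meas]
  simp [NNReal.smul_def]

lemma integrable_id_std : Integrable (fun x : ℝ => x) (gaussianReal 0 1) := by
  rw [integrable_std_iff]
  have h := (integrable_mul_exp_neg_mul_sq (b := 2⁻¹) (by norm_num)).const_mul ((√(2*π))⁻¹)
  refine h.congr (Filter.Eventually.of_forall fun x => ?_)
  simp only [stdPdf_coe]; ring

lemma integrable_abs_std : Integrable (fun x : ℝ => |x|) (gaussianReal 0 1) :=
  integrable_id_std.abs

lemma integral_id_std : ∫ x, x ∂(gaussianReal 0 1) = 0 := by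
  have hmap : (gaussianReal 0 1).map (fun x => (-1:ℝ) * x) = gaussianReal 0 1 := by
    rw [show (fun x : ℝ => (-1:ℝ) * x) = ((-1:ℝ) * ·) from rfl, gaussianReal_map_const_mul]
    norm_num
  have h := integral_map (μ := gaussianReal 0 1) (φ := fun x : ℝ => (-1:ℝ) * x)
    ((measurable_id.const_mul (-1:ℝ)).aemeasurable) (f := fun x : ℝ => x)
    aestronglyMeasurable_id
  rw [hmap] at h
  simp only [neg_one_mul] at h
  have h2 : ∫ x, -x ∂(gaussianReal 0 1) = - ∫ x, x ∂(gaussianReal 0 1) := integral_neg _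
  rw [h2] at h
  linarith



lemma integrableOn_sq_mul_exp : IntegrableOn (fun r : ℝ => r^2 * rexp (-(2⁻¹:ℝ) * r^2)) (Ioi 0) := by
  have h := integrable_rpow_mul_exp_neg_mul_sq (b := 2⁻¹) (by norm_num) (s := 2) (by norm_num)
  have h2 : Integrable (fun r : ℝ => r^2 * rexp (-(2⁻¹:ℝ) * r^2)) := by
    refine h.congr (Filter.Eventually.of_forall fun x => ?_)
    have h2 : x ^ (2:ℝ) = x ^ (2:ℕ) := by
      rw [← Real.rpow_natCast x 2]; norm_num
    simp only [h2]
  exact h2.integrableOn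

lemma J1 : ∫ r in Ioi (0:ℝ), r^2 * rexp (-(2⁻¹:ℝ) * r^2) = √(π/2) := by
  have hder : ∀ r ∈ Ici (0:ℝ), HasDerivAt (fun r : ℝ => -r * rexp (-(2⁻¹:ℝ) * r^2))
      (r^2 * rexp (-(2⁻¹:ℝ) * r^2) - rexp (-(2⁻¹:ℝ) * r^2)) r := by
    intro r _
    have h1 : HasDerivAt (fun r : ℝ => -(2⁻¹:ℝ) * r^2) (-(2⁻¹:ℝ) * (2 * r)) r := by
      simpa using ((hasDerivAt_pow 2 r).const_mul (-(2⁻¹:ℝ)))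
    have h2 := h1.exp
    have h3 : HasDerivAt (fun r : ℝ => -r * rexp (-(2⁻¹:ℝ) * r^2)) _ r := (hasDerivAt_neg r).mul h2
    convert h3 using 1
    ring
  have hint : IntegrableOn (fun r : ℝ =>
      r^2 * rexp (-(2⁻¹:ℝ) * r^2) - rexp (-(2⁻¹:ℝ) * r^2)) (Ioi 0) :=
    integrableOn_sq_mul_exp.sub ((integrable_exp_neg_mul_sq (by norm_num)).integrableOn)
  have htend : Tendsto (fun r : ℝ => -r * rexp (-(2⁻¹:ℝ) * r^2)) atTop (nhds 0) := by
    have h := tendsto_rpow_abs_mul_exp_neg_mul_sq_cocompact (a := 2⁻¹) (by norm_num) 1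
    have h2 : Tendsto (fun r : ℝ => |r| ^ (1:ℝ) * rexp (-(2⁻¹:ℝ) * r^2)) atTop (nhds 0) := by
      refine h.mono_left ?_
      rw [cocompact_eq_atBot_atTop]
      exact le_sup_right
    rw [tendsto_zero_iff_norm_tendsto_zero]
    refine h2.congr fun r => ?_
    rw [Real.rpow_one, Real.norm_eq_abs, abs_mul, abs_neg, abs_of_pos (Real.exp_pos _)]
  have key := integral_Ioi_of_hasDerivAt_of_tendsto' hder hint htend
  have h0 : -(0:ℝ) * rexp (-(2⁻¹:ℝ) * 0^2) = 0 := by norm_num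
  rw [h0] at key
  have hgauss : ∫ r in Ioi (0:ℝ), rexp (-(2⁻¹:ℝ) * r^2) = √(π / (2⁻¹:ℝ)) / 2 :=
    integral_gaussian_Ioi _
  have hsplit : ∫ r in Ioi (0:ℝ), (r^2 * rexp (-(2⁻¹:ℝ) * r^2) - rexp (-(2⁻¹:ℝ) * r^2))
      = (∫ r in Ioi (0:ℝ), r^2 * rexp (-(2⁻¹:ℝ) * r^2)) - ∫ r in Ioi (0:ℝ), rexp (-(2⁻¹:ℝ) * r^2) :=
    integral_sub integrableOn_sq_mul_exp ((integrable_exp_neg_mul_sq (by norm_num)).integrableOn)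
  rw [hsplit, hgauss] at key
  have : √(π / 2⁻¹) / 2 = √(π/2) := by
    rw [show π / (2⁻¹:ℝ) = π * 4 / 2 by ring]
    rw [show π * 4 / 2 = (π/2) * 4 by ring, Real.sqrt_mul (by positivity),
      show √(4:ℝ) = 2 by rw [show (4:ℝ) = 2^2 by norm_num, Real.sqrt_sq (by norm_num)]]
    ring
  linarith [key, this ▸ key]



lemma abs_cos_intervalIntegrable (a b : ℝ) :
    IntervalIntegrable (fun θ : ℝ => |Real.cos θ|) volume a b :=
  (Real.continuous_cos.abs).intervalIntegrable a b

lemma integral_abs_cos : ∫ θ in (-π)..π, |Real.cos θ| = 4 := by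
  have h1 : ∫ θ in (-π)..(-(π/2)), |Real.cos θ| = 1 := by
    rw [intervalIntegral.integral_congr (g := fun θ => -Real.cos θ) ?_]
    · rw [intervalIntegral.integral_neg, integral_cos]
      simp [Real.sin_pi_div_two]
    · intro θ hθ
      rw [uIcc_of_le (by linarith [pi_pos])] at hθ
      have : Real.cos θ ≤ 0 := by
        rw [← Real.cos_neg]
        exact Real.cos_nonpos_of_pi_div_two_le_of_le (by linarith [hθ.2]) (by linarith [hθ.1, pi_pos])
      simp [abs_of_nonpos this]
  have h2 : ∫ θ in (-(π/2))..(π/2), |Real.cos θ| = 2 := by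
    rw [intervalIntegral.integral_congr (g := fun θ => Real.cos θ) ?_]
    · rw [integral_cos]; simp [Real.sin_pi_div_two]; norm_num
    · intro θ hθ
      rw [uIcc_of_le (by linarith [pi_pos])] at hθ
      exact abs_of_nonneg (Real.cos_nonneg_of_mem_Icc ⟨hθ.1, hθ.2⟩)
  have h3 : ∫ θ in (π/2)..π, |Real.cos θ| = 1 := by
    rw [intervalIntegral.integral_congr (g := fun θ => -Real.cos θ) ?_]
    · rw [intervalIntegral.integral_neg, integral_cos]
      simp [Real.sin_pi_div_two]
    · intro θ hθ
      rw [uIcc_of_le (by linarith [pi_pos])] at hθ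
      have : Real.cos θ ≤ 0 :=
        Real.cos_nonpos_of_pi_div_two_le_of_le hθ.1 (by linarith [hθ.2, pi_pos])
      simp [abs_of_nonpos this]
  have hA := intervalIntegral.integral_add_adjacent_intervals
    (abs_cos_intervalIntegrable (-π) (-(π/2))) (abs_cos_intervalIntegrable (-(π/2)) (π/2))
  have hB := intervalIntegral.integral_add_adjacent_intervals
    (abs_cos_intervalIntegrable (-π) (π/2)) (abs_cos_intervalIntegrable (π/2) π)
  rw [h1, h2] at hA
  rw [h3] at hB
  linarith

lemma J2 (α β : ℝ) :
    ∫ θ in Ioo (-π) π, |α * Real.cos θ - β * Real.sin θ| = 4 * √(α^2 + β^2) := by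
  set z : ℂ := α + β * Complex.I with hz
  have hre : z.re = α := by simp [hz]
  have him : z.im = β := by simp [hz]
  set s : ℝ := ‖z‖ with hs
  set φ : ℝ := Complex.arg z with hφ
  have hα : s * Real.cos φ = α := by rw [hs, hφ, Complex.norm_mul_cos_arg, hre]
  have hβ : s * Real.sin φ = β := by rw [hs, hφ, Complex.norm_mul_sin_arg, him]
  have hsval : s = √(α^2 + β^2) := by
    rw [hs, Complex.norm_def, ← hre, ← him, Complex.normSq_apply]
    ring_nf
  have hpoint : ∀ θ : ℝ, |α * Real.cos θ - β * Real.sin θ| = s * |Real.cos (θ + φ)| := by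
    intro θ
    rw [← hα, ← hβ, Real.cos_add,
      show s * Real.cos φ * Real.cos θ - s * Real.sin φ * Real.sin θ
        = s * (Real.cos θ * Real.cos φ - Real.sin θ * Real.sin φ) from by ring,
      abs_mul, abs_of_nonneg (norm_nonneg z)]
  simp only [hpoint]
  rw [← integral_Ioc_eq_integral_Ioo, ← intervalIntegral.integral_of_le (by linarith [pi_pos])]
  rw [intervalIntegral.integral_const_mul]
  have hshift : ∫ θ in (-π)..π, |Real.cos (θ + φ)| = ∫ θ in (-π + φ)..(π + φ), |Real.cos θ| :=
    intervalIntegral.integral_comp_add_right (fun θ => |Real.cos θ|) φ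
  have hper : Function.Periodic (fun x : ℝ => |Real.cos x|) (2 * π) :=
    Real.cos_periodic.comp abs
  have hper2 := hper.intervalIntegral_add_eq (-π + φ) (-π)
  rw [show -π + φ + 2 * π = π + φ by ring, show -π + 2 * π = π by ring] at hper2
  rw [hshift, hper2, integral_abs_cos, hsval]
  ring


lemma prod_gaussian_eq :
    (gaussianReal 0 1).prod (gaussianReal 0 1)
      = (volume.prod volume).withDensity
          (fun p : ℝ × ℝ => (stdPdf p.1 : ℝ≥0∞) * (stdPdf p.2 : ℝ≥0∞)) := by
  refine Measure.prod_eq fun s t hs ht => ?_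
  rw [withDensity_apply _ (hs.prod ht), ← Measure.prod_restrict,
    lintegral_prod_mul (stdPdf_meas.coe_nnreal_ennreal.aemeasurable)
      (stdPdf_meas.coe_nnreal_ennreal.aemeasurable),
    gaussianReal_one_eq, withDensity_apply _ hs, withDensity_apply _ ht]

lemma integral_prod_std (f : ℝ × ℝ → ℝ) :
    ∫ p, f p ∂((gaussianReal 0 1).prod (gaussianReal 0 1))
      = ∫ p : ℝ × ℝ, (stdPdf p.1 : ℝ) * (stdPdf p.2 : ℝ) * f p ∂(volume.prod volume) := by
  rw [prod_gaussian_eq]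
  have hm : Measurable (fun p : ℝ × ℝ => stdPdf p.1 * stdPdf p.2) :=
    (stdPdf_meas.comp measurable_fst).mul (stdPdf_meas.comp measurable_snd)
  have h2 : ((volume.prod volume).withDensity
        (fun p : ℝ × ℝ => (stdPdf p.1 : ℝ≥0∞) * (stdPdf p.2 : ℝ≥0∞)))
      = ((volume.prod volume).withDensity
        (fun p : ℝ × ℝ => ((stdPdf p.1 * stdPdf p.2 : ℝ≥0) : ℝ≥0∞))) := by
    congr 1
  rw [h2, integral_withDensity_eq_integral_smul hm f]
  refine integral_congr_ae (Filter.Eventually.of_forall fun p => ?_)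
  simp only [NNReal.smul_def, NNReal.coe_mul, smul_eq_mul]



lemma T_val (α β : ℝ) :
    ∫ p, |α * p.1 - β * p.2| ∂((gaussianReal 0 1).prod (gaussianReal 0 1))
      = √(α^2 + β^2) * √(2/π) := by
  rw [integral_prod_std, ← Measure.volume_eq_prod]
  rw [← integral_comp_polarCoord_symm
    (fun p : ℝ × ℝ => (stdPdf p.1 : ℝ) * (stdPdf p.2 : ℝ) * |α * p.1 - β * p.2|)]
  have htarget : polarCoord.target = Ioi (0:ℝ) ×ˢ Ioo (-π) π := rfl
  have hcongr : ∀ p ∈ polarCoord.target,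
      p.1 • ((stdPdf (polarCoord.symm p).1 : ℝ) * (stdPdf (polarCoord.symm p).2 : ℝ)
          * |α * (polarCoord.symm p).1 - β * (polarCoord.symm p).2|)
      = (p.1^2 * rexp (-(2⁻¹:ℝ) * p.1^2))
          * ((2*π)⁻¹ * |α * Real.cos p.2 - β * Real.sin p.2|) := by
    rintro ⟨r, θ⟩ hp
    rw [htarget] at hp
    have hr : 0 < r := hp.1
    have hsymm : polarCoord.symm (r, θ) = (r * Real.cos θ, r * Real.sin θ) := rfl
    rw [hsymm]
    simp only [smul_eq_mul]
    rw [stdPdf_coe, stdPdf_coe]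
    have habs : |α * (r * Real.cos θ) - β * (r * Real.sin θ)|
        = r * |α * Real.cos θ - β * Real.sin θ| := by
      rw [show α * (r * Real.cos θ) - β * (r * Real.sin θ)
          = r * (α * Real.cos θ - β * Real.sin θ) from by ring, abs_mul, abs_of_pos hr]
    have hconst : (√(2*π))⁻¹ * ((√(2*π))⁻¹ : ℝ) = (2*π)⁻¹ := by
      rw [← mul_inv, Real.mul_self_sqrt (by positivity)]
    have hee : rexp (-(2⁻¹:ℝ) * (r * Real.cos θ)^2) * rexp (-(2⁻¹:ℝ) * (r * Real.sin θ)^2)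
        = rexp (-(2⁻¹:ℝ) * r^2) := by
      rw [← Real.exp_add]
      congr 1
      have h := Real.sin_sq_add_cos_sq θ
      nlinarith [h]
    have hkey : (√(2*π))⁻¹ * rexp (-(2⁻¹:ℝ) * (r * Real.cos θ)^2)
          * ((√(2*π))⁻¹ * rexp (-(2⁻¹:ℝ) * (r * Real.sin θ)^2))
        = (2*π)⁻¹ * rexp (-(2⁻¹:ℝ) * r^2) := by
      rw [show (√(2*π))⁻¹ * rexp (-(2⁻¹:ℝ) * (r * Real.cos θ)^2)
          * ((√(2*π))⁻¹ * rexp (-(2⁻¹:ℝ) * (r * Real.sin θ)^2))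
          = ((√(2*π))⁻¹ * (√(2*π))⁻¹)
            * (rexp (-(2⁻¹:ℝ) * (r * Real.cos θ)^2) * rexp (-(2⁻¹:ℝ) * (r * Real.sin θ)^2))
          from by ring, hconst, hee]
    rw [hkey, habs]
    ring
  rw [setIntegral_congr_fun (polarCoord.open_target.measurableSet) hcongr]
  rw [htarget, Measure.volume_eq_prod, setIntegral_prod_mul (μ := (volume : Measure ℝ)) (ν := (volume : Measure ℝ))
    (fun r : ℝ => r^2 * rexp (-(2⁻¹:ℝ) * r^2))
    (fun θ : ℝ => (2*π)⁻¹ * |α * Real.cos θ - β * Real.sin θ|) (Ioi 0) (Ioo (-π) π), J1]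
  rw [MeasureTheory.integral_const_mul, J2]
  rw [show (2*π)⁻¹ * (4 * √(α^2+β^2)) = √(α^2+β^2) * ((2*π)⁻¹ * 4) from by ring]
  rw [show √(π/2) * (√(α^2+β^2) * ((2*π)⁻¹ * 4)) = √(α^2+β^2) * (√(π/2) * ((2*π)⁻¹*4)) from by ring]
  congr 1
  rw [show (2:ℝ)/π = (π/2) * ((2*π)⁻¹*4)^2 from by field_simp; ring]
  rw [Real.sqrt_mul (by positivity), Real.sqrt_sq (by positivity)]

lemma integrable_T (α β : ℝ) :
    Integrable (fun p : ℝ × ℝ => |α * p.1 - β * p.2|)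
      ((gaussianReal 0 1).prod (gaussianReal 0 1)) := by
  have hfst : Integrable (fun p : ℝ × ℝ => |p.1|)
      ((gaussianReal 0 1).prod (gaussianReal 0 1)) := by
    have h := integrable_abs_std.mul_prod (integrable_const (μ := gaussianReal 0 1) (1:ℝ))
    simpa using h
  have hsnd : Integrable (fun p : ℝ × ℝ => |p.2|)
      ((gaussianReal 0 1).prod (gaussianReal 0 1)) := by
    have h := (integrable_const (μ := gaussianReal 0 1) (1:ℝ)).mul_prod integrable_abs_std
    simpa using h
  have hb : Integrable (fun p : ℝ × ℝ => |α| * |p.1| + |β| * |p.2|)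
      ((gaussianReal 0 1).prod (gaussianReal 0 1)) :=
    (hfst.const_mul |α|).add (hsnd.const_mul |β|)
  refine hb.mono' ?_ (Filter.Eventually.of_forall fun p => ?_)
  · exact (Continuous.abs ((continuous_const.mul continuous_fst).sub
      (continuous_const.mul continuous_snd))).aestronglyMeasurable
  · rw [Real.norm_eq_abs, abs_abs]
    calc |α * p.1 - β * p.2| ≤ |α * p.1| + |β * p.2| := abs_sub _ _
      _ = |α| * |p.1| + |β| * |p.2| := by rw [abs_mul, abs_mul]

lemma rep (σ m : ℝ) :
    gaussianReal m (Real.toNNReal (σ^2))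
      = Measure.map (fun x => σ * x + m) (gaussianReal 0 1) := by
  have h1 : Measure.map (fun x : ℝ => σ * x) (gaussianReal 0 1)
      = gaussianReal 0 (Real.toNNReal (σ^2)) := by
    rw [show (fun x : ℝ => σ * x) = (σ * ·) from rfl, gaussianReal_map_const_mul σ]
    rw [mul_zero]
    congr 1
    ext
    simp [Real.coe_toNNReal _ (sq_nonneg σ)]
  calc gaussianReal m (Real.toNNReal (σ^2))
      = gaussianReal (0 + m) (Real.toNNReal (σ^2)) := by rw [zero_add]
    _ = Measure.map (· + m) (gaussianReal 0 (Real.toNNReal (σ^2))) :=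
        (gaussianReal_map_add_const m).symm
    _ = Measure.map (· + m) (Measure.map (fun x : ℝ => σ * x) (gaussianReal 0 1)) := by rw [h1]
    _ = Measure.map (fun x => σ * x + m) (gaussianReal 0 1) := by
        rw [Measure.map_map (f := fun x : ℝ => σ * x) (g := fun x : ℝ => x + m)
          (by fun_prop) (by fun_prop)]
        rfl

lemma integrable_affine (σ m : ℝ) :
    Integrable (fun x : ℝ => σ * x + m) (gaussianReal 0 1) :=
  (integrable_id_std.const_mul σ).add (integrable_const m)

lemma integral_affine (σ m : ℝ) : ∫ x, (σ * x + m) ∂(gaussianReal 0 1) = m := by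
  rw [integral_add (integrable_id_std.const_mul σ) (integrable_const m),
    MeasureTheory.integral_const_mul, integral_id_std, integral_const]
  simp

end ExpMaxAux

open ExpMaxAux

open MeasureTheory ProbabilityTheory

/-- For independent Gaussians `X ~ N(μ, σ₁²)` and `Y ~ N(μ, σ₂²)`,
`E[max(X,Y)] = μ + √((σ₁² + σ₂²)/(2π))`. -/
theorem expected_max_two_gaussians
    (Ω : Type) [MeasurableSpace Ω] (P : Measure Ω) [IsProbabilityMeasure P]
    (μ σ₁ σ₂ : ℝ) (h1 : 0 ≤ σ₁) (h2 : 0 ≤ σ₂)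
    (X Y : Ω → ℝ) (hmX : Measurable X) (hmY : Measurable Y)
    (hX : Measure.map X P = gaussianReal μ (Real.toNNReal (σ₁ ^ 2)))
    (hY : Measure.map Y P = gaussianReal μ (Real.toNNReal (σ₂ ^ 2)))
    (hindep : IndepFun X Y P) :
    (∫ ω, max (X ω) (Y ω) ∂P) = μ + Real.sqrt ((σ₁ ^ 2 + σ₂ ^ 2) / (2 * Real.pi)) := by
  have haff1 : Measurable (fun x : ℝ => σ₁ * x + μ) :=
    (measurable_id.const_mul σ₁).add_const μ
  have haff2 : Measurable (fun x : ℝ => σ₂ * x + μ) :=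
    (measurable_id.const_mul σ₂).add_const μ
  have hXrep : Measure.map X P = Measure.map (fun x => σ₁ * x + μ) (gaussianReal 0 1) := by
    rw [hX, rep]
  have hYrep : Measure.map Y P = Measure.map (fun x => σ₂ * x + μ) (gaussianReal 0 1) := by
    rw [hY, rep]
  -- integrability of X and Y
  have hIX : Integrable X P := by
    have h0 : Integrable (id : ℝ → ℝ) (Measure.map X P) := by
      rw [hXrep]
      exact (integrable_map_measure aestronglyMeasurable_id haff1.aemeasurable).mpr
        (integrable_affine σ₁ μ)
    exact (integrable_map_measure aestronglyMeasurable_id hmX.aemeasurable).mp h0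
  have hIY : Integrable Y P := by
    have h0 : Integrable (id : ℝ → ℝ) (Measure.map Y P) := by
      rw [hYrep]
      exact (integrable_map_measure aestronglyMeasurable_id haff2.aemeasurable).mpr
        (integrable_affine σ₂ μ)
    exact (integrable_map_measure aestronglyMeasurable_id hmY.aemeasurable).mp h0
  -- means
  have hEX : ∫ ω, X ω ∂P = μ := by
    have h0 : ∫ ω, X ω ∂P = ∫ x, id x ∂(Measure.map X P) :=
      (integral_map hmX.aemeasurable aestronglyMeasurable_id).symm
    rw [h0, hXrep, integral_map haff1.aemeasurable aestronglyMeasurable_id]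
    exact integral_affine σ₁ μ
  have hEY : ∫ ω, Y ω ∂P = μ := by
    have h0 : ∫ ω, Y ω ∂P = ∫ x, id x ∂(Measure.map Y P) :=
      (integral_map hmY.aemeasurable aestronglyMeasurable_id).symm
    rw [h0, hYrep, integral_map haff2.aemeasurable aestronglyMeasurable_id]
    exact integral_affine σ₂ μ
  -- pair
  have hpair : Measure.map (fun ω => (X ω, Y ω)) P = (Measure.map X P).prod (Measure.map Y P) :=
    (ProbabilityTheory.indepFun_iff_map_prod_eq_prod_map_map hmX.aemeasurable
      hmY.aemeasurable).mp hindep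
  have hprodmap : (Measure.map X P).prod (Measure.map Y P)
      = Measure.map (Prod.map (fun x => σ₁ * x + μ) (fun x => σ₂ * x + μ))
          ((gaussianReal 0 1).prod (gaussianReal 0 1)) := by
    rw [hXrep, hYrep, Measure.map_prod_map _ _ haff1 haff2]
  have hsm2 : ∀ (ν : Measure (ℝ × ℝ)), AEStronglyMeasurable (fun p : ℝ × ℝ => |p.1 - p.2|) ν :=
    fun ν => ((continuous_fst.sub continuous_snd).abs).aestronglyMeasurable
  have habsXY : ∫ ω, |X ω - Y ω| ∂P = √(σ₁^2 + σ₂^2) * √(2/π) := by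
    have h0 : ∫ ω, |X ω - Y ω| ∂P
        = ∫ p : ℝ × ℝ, |p.1 - p.2| ∂(Measure.map (fun ω => (X ω, Y ω)) P) :=
      (integral_map (hmX.prodMk hmY).aemeasurable (hsm2 _)).symm
    rw [h0, hpair, hprodmap,
      integral_map (haff1.prodMap haff2).aemeasurable (hsm2 _)]
    have h1' : ∀ p : ℝ × ℝ,
        |(Prod.map (fun x => σ₁ * x + μ) (fun x => σ₂ * x + μ) p).1
          - (Prod.map (fun x => σ₁ * x + μ) (fun x => σ₂ * x + μ) p).2|
        = |σ₁ * p.1 - σ₂ * p.2| := by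
      intro p
      simp only [Prod.map_fst, Prod.map_snd]
      congr 1
      ring
    rw [integral_congr_ae (Filter.Eventually.of_forall h1')]
    exact T_val σ₁ σ₂
  have hIabs : Integrable (fun ω => |X ω - Y ω|) P := by
    have h0 : Integrable (fun p : ℝ × ℝ => |p.1 - p.2|)
        ((Measure.map X P).prod (Measure.map Y P)) := by
      rw [hprodmap]
      rw [integrable_map_measure (hsm2 _) (haff1.prodMap haff2).aemeasurable]
      refine (integrable_T σ₁ σ₂).congr (Filter.Eventually.of_forall fun p => ?_)
      simp only [Function.comp_apply, Prod.map_fst, Prod.map_snd]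
      congr 1
      ring
    rw [← hpair] at h0
    exact (integrable_map_measure (hsm2 _) (hmX.prodMk hmY).aemeasurable).mp h0
  -- max identity
  have hmax : ∀ ω, max (X ω) (Y ω) = ((X ω + Y ω) + |X ω - Y ω|) / 2 := by
    intro ω
    rcases le_total (X ω) (Y ω) with h | h
    · rw [max_eq_right h, abs_of_nonpos (by linarith)]; ring
    · rw [max_eq_left h, abs_of_nonneg (by linarith)]; ring
  simp_rw [hmax]
  have e1 : ∫ a, (X a + Y a + |X a - Y a|) ∂P
      = (∫ a, (X a + Y a) ∂P) + ∫ a, |X a - Y a| ∂P := integral_add (hIX.add hIY) hIabs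
  have e2 : ∫ a, (X a + Y a) ∂P = (∫ a, X a ∂P) + ∫ a, Y a ∂P := integral_add hIX hIY
  rw [integral_div, e1, e2, hEX, hEY, habsXY]
  have hval : √(σ₁^2 + σ₂^2) * √(2/π) = 2 * √((σ₁^2 + σ₂^2) / (2*π)) := by
    rw [← Real.sqrt_mul (by positivity)]
    rw [show (2:ℝ) * √((σ₁^2 + σ₂^2) / (2*π)) = √(2^2) * √((σ₁^2 + σ₂^2) / (2*π)) from by
      rw [Real.sqrt_sq (by norm_num)]]
    rw [← Real.sqrt_mul (by positivity)]
    congr 1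
    have hπ : (π:ℝ) ≠ 0 := Real.pi_ne_zero
    field_simp [hπ]
  rw [hval]
  ring
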